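/- Every covering map is a semicovering map. That is, if p : Y → X is a covering map then p is a local homeomorphism and for every y ∈ Y the induced map 𝒫p : (𝒫Y)_y → (𝒫X)_{p(y)} on spaces of paths starting at a point, with the compact-open topology, is a homeomorphism. -/

import Mathlib

open unitInterval

variable {X Y : Type*} [TopologicalSpace X] [TopologicalSpace Y]

/-- The space of paths in `X` starting at `x`, with the compact-open topology. -/
abbrev PathsFrom (X : Type*) [TopologicalSpace X] (x : X) : Type _ :=
  {α : C(I, X) // α 0 = x}

/-- Postcomposition `𝒫p : (𝒫Y)_y → (𝒫X)_{p(y)}`. -/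
def pathPost (p : C(Y, X)) (y : Y) (α : PathsFrom Y y) : PathsFrom X (p y) :=
  ⟨p.comp α.1, by simp [α.2]⟩

/-- The space of homotopies of paths starting at `x` (the initial-endpoint edge is fixed at `x`),
with the compact-open topology. -/
abbrev HtpysFrom (X : Type*) [TopologicalSpace X] (x : X) : Type _ :=
  {φ : C(I × I, X) // ∀ s, φ (s, 0) = x}

/-- Postcomposition `Φp : (ΦY)_y → (ΦX)_{p(y)}`. -/
def htpyPost (p : C(Y, X)) (y : Y) (φ : HtpysFrom Y y) : HtpysFrom X (p y) :=
  ⟨p.comp φ.1, by simp [φ.2]⟩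

/-- A semicovering map: a local homeomorphism with continuous lifting of paths and homotopies. -/
structure IsSemicoveringMap (p : C(Y, X)) : Prop where
  isLocalHomeomorph : IsLocalHomeomorph p
  pathLifting : ∀ y : Y, IsHomeomorph (pathPost p y)
  htpyLifting : ∀ y : Y, IsHomeomorph (htpyPost p y)

section aux

open Set Topology

/-- Pasting lemma for a `≤`-piecewise function, `ContinuousOn` version. -/
lemma continuousOn_if_le' {α β γ : Type*} [TopologicalSpace α] [TopologicalSpace β]
    [TopologicalSpace γ] [LinearOrder γ] [OrderClosedTopology γ]
    {f' g' : α → β} {u v : α → γ} {s : Set α} [∀ x, Decidable (u x ≤ v x)]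
    (hu : Continuous u) (hv : Continuous v)
    (hf' : ContinuousOn f' (s ∩ {x | u x ≤ v x})) (hg' : ContinuousOn g' (s ∩ {x | v x ≤ u x}))
    (he : ∀ x ∈ s, u x = v x → f' x = g' x) :
    ContinuousOn (fun x => if u x ≤ v x then f' x else g' x) s := by
  apply ContinuousOn.if' (p := fun x => u x ≤ v x) ?_ ?_ hf'
      (hg'.mono (fun x hx => ⟨hx.1, le_of_not_ge hx.2⟩))
  · intro a ha
    have heq : u a = v a := frontier_le_subset_eq hu hv ha.2
    rw [if_pos heq.le]
    exact hf' a ⟨ha.1, heq.le⟩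
  · intro a ha
    have heq : u a = v a := frontier_le_subset_eq hu hv ha.2
    rw [if_pos heq.le, he a ha.1 heq]
    exact (hg' a ⟨ha.1, heq.ge⟩).mono_left
      (nhdsWithin_mono _ (fun x hx => ⟨hx.1, le_of_not_ge hx.2⟩))

/-- A covering map satisfies the homotopy lifting property with respect to any space `Z`:
any continuous family of paths, together with a continuous choice of initial lifts,
lifts continuously. -/
theorem IsCoveringMap.exists_continuous_lift {E X Z : Type*} [TopologicalSpace E]
    [TopologicalSpace X] [TopologicalSpace Z]
    {f : E → X} (hf : IsCoveringMap f) (H : C(Z × I, X)) (e₀ : Z → E) (he₀ : Continuous e₀)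
    (h0 : ∀ z, f (e₀ z) = H (z, 0)) :
    ∃ L : Z × I → E, Continuous L ∧ (∀ p, f (L p) = H p) ∧ ∀ z, L (z, 0) = e₀ z := by
  classical
  have hrange : IsClopen (Set.range f) := by
    refine ⟨?_, hf.isOpenMap.isOpen_range⟩
    rw [← isOpen_compl_iff, isOpen_iff_forall_mem_open]
    intro x hx
    obtain ⟨_, U, hxU, hU, _, Hh, _⟩ := hf x
    refine ⟨U, ?_, hU, hxU⟩
    rintro y hyU ⟨e, rfl⟩
    exact hx ⟨(Hh ⟨e, hyU⟩).2.1, (Hh ⟨e, hyU⟩).2.2⟩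
  have key : ∀ z₀ : Z, ∃ W : Set Z, IsOpen W ∧ z₀ ∈ W ∧ ∃ g : Z × I → E,
      ContinuousOn g (W ×ˢ (univ : Set I)) ∧ (∀ z ∈ W, ∀ s : I, f (g (z, s)) = H (z, s)) ∧
      ∀ z ∈ W, g (z, 0) = e₀ z := by
    intro z₀
    have hne : ∀ τ : I, Nonempty (f ⁻¹' {H (z₀, τ)}) := by
      have hS : {s : I | H (z₀, s) ∈ Set.range f} = univ := by
        apply IsClopen.eq_univ (hrange.preimage (H.continuous.comp (Continuous.prodMk_right z₀)))
        exact ⟨0, e₀ z₀, h0 z₀⟩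
      intro τ
      have hτ : τ ∈ {s : I | H (z₀, s) ∈ Set.range f} := hS ▸ mem_univ τ
      obtain ⟨e, he⟩ := hτ
      exact ⟨⟨e, he⟩⟩
    obtain ⟨t, ht0, htm, ⟨N, htN⟩, hsub⟩ :=
      exists_monotone_Icc_subset_open_cover_unitInterval
        (c := fun τ : I => {s : I | H (z₀, s) ∈ ((hf (H (z₀, τ))).toTrivialization).baseSet})
        (fun τ => ((hf (H (z₀, τ))).toTrivialization.open_baseSet).preimage
          (H.continuous.comp (Continuous.prodMk_right z₀)))
        (fun s _ => mem_iUnion.2 ⟨s, (hf (H (z₀, s))).mem_toTrivialization_baseSet⟩)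
    -- inductive construction along the partition
    have ind : ∀ n : ℕ, ∃ W : Set Z, IsOpen W ∧ z₀ ∈ W ∧ ∃ g : Z × I → E,
        ContinuousOn g (W ×ˢ Icc 0 (t n)) ∧
        (∀ z ∈ W, ∀ s ∈ Icc (0 : I) (t n), f (g (z, s)) = H (z, s)) ∧
        ∀ z ∈ W, g (z, 0) = e₀ z := by
      intro n
      induction n with
      | zero =>
        refine ⟨univ, isOpen_univ, mem_univ _, fun p => e₀ p.1,
          (he₀.comp continuous_fst).continuousOn, ?_, fun z _ => rfl⟩
        intro z _ s hs
        have hs0 : s = 0 := le_antisymm (ht0 ▸ hs.2) nonneg'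
        rw [hs0]; exact h0 z
      | succ n ih =>
        obtain ⟨W, hWo, hWz, g, hgc, hgl, hg0⟩ := ih
        obtain ⟨τ, hτ⟩ := hsub n
        set T := (hf (H (z₀, τ))).toTrivialization with hTdef
        have htt : t n ≤ t (n + 1) := htm (Nat.le_succ n)
        -- tube lemma
        have hsub2 : ({z₀} ×ˢ Icc (t n) (t (n + 1)) : Set (Z × I)) ⊆ H ⁻¹' T.baseSet := by
          rintro ⟨z, s⟩ ⟨hz, hs⟩
          rw [mem_singleton_iff] at hz; subst hz
          exact hτ hs
        obtain ⟨u, v, hu, hv, hz₀u, hKv, huv⟩ := generalized_tube_lemma isCompact_singleton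
          isClosed_Icc.isCompact (T.open_baseSet.preimage H.continuous) hsub2
        set W' := W ∩ u with hW'def
        have hz₀W' : z₀ ∈ W' := ⟨hWz, hz₀u rfl⟩
        have hmem : ∀ z ∈ W', ∀ s ∈ Icc (t n) (t (n + 1)), H (z, s) ∈ T.baseSet :=
          fun z hz s hs => huv ⟨hz.2, hKv hs⟩
        have htn0 : (0 : I) ≤ t n := nonneg'
        have hsrc : ∀ z ∈ W', g (z, t n) ∈ T.source := by
          intro z hz
          rw [T.mem_source, hgl z hz.1 (t n) ⟨htn0, le_rfl⟩]
          exact hmem z hz (t n) ⟨le_rfl, htt⟩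
        set g' : Z × I → E :=
          fun p => T.toPartialHomeomorph.symm (H p, (T (g (p.1, t n))).2) with hg'def
        have hbd : ∀ z ∈ W', g' (z, t n) = g (z, t n) := by
          intro z hz
          have h1 : (T (g (z, t n))).1 = H (z, t n) := by
            rw [T.coe_fst (hsrc z hz)]
            exact hgl z hz.1 (t n) ⟨htn0, le_rfl⟩
          have : (H (z, t n), (T (g (z, t n))).2) = T (g (z, t n)) := Prod.ext h1.symm rfl
          rw [hg'def]; dsimp only
          rw [this]
          exact T.toPartialHomeomorph.left_inv (hsrc z hz)
        have hg'l : ∀ z ∈ W', ∀ s ∈ Icc (t n) (t (n + 1)), f (g' (z, s)) = H (z, s) := by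
          intro z hz s hs
          exact T.proj_symm_apply (T.mem_target.2 (hmem z hz s hs))
        -- continuity of g'
        have hgW' : ContinuousOn (fun z => g (z, t n)) W' := by
          apply hgc.comp (Continuous.continuousOn (by fun_prop))
          exact fun z hz => ⟨hz.1, ⟨htn0, le_rfl⟩⟩
        have hc : ContinuousOn (fun z => (T (g (z, t n))).2) W' := by
          apply continuous_snd.comp_continuousOn
          have := T.toPartialHomeomorph.continuousOn.comp hgW' (fun z hz => hsrc z hz)
          exact this
        have hg'c : ContinuousOn g' (W' ×ˢ Icc (t n) (t (n + 1))) := by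
          apply T.toPartialHomeomorph.continuousOn_symm.comp
          · exact H.continuous.continuousOn.prodMk
              (hc.comp continuous_fst.continuousOn (fun p hp => hp.1))
          · intro p hp
            exact T.mem_target.2 (hmem p.1 hp.1 p.2 hp.2)
        refine ⟨W', hWo.inter hu, hz₀W', fun p => if p.2 ≤ t n then g p else g' p, ?_, ?_, ?_⟩
        · apply continuousOn_if_le' continuous_snd continuous_const
          · exact hgc.mono (fun p hp => ⟨hp.1.1.1, ⟨hp.1.2.1, hp.2⟩⟩)
          · exact hg'c.mono (fun p hp => ⟨hp.1.1, ⟨hp.2, hp.1.2.2⟩⟩)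
          · rintro ⟨z, s⟩ hp (hs : s = t n)
            subst hs
            exact (hbd z hp.1).symm
        · rintro z hz s hs
          dsimp only
          by_cases h : s ≤ t n
          · rw [if_pos h]; exact hgl z hz.1 s ⟨hs.1, h⟩
          · rw [if_neg h]; exact hg'l z hz s ⟨le_of_not_ge h, hs.2⟩
        · intro z hz
          dsimp only
          rw [if_pos htn0]
          exact hg0 z hz.1
    obtain ⟨W, hWo, hWz, g, hgc, hgl, hg0⟩ := ind N
    have h1 : t N = 1 := htN N le_rfl
    have : Icc (0 : I) (t N) = univ := by
      rw [h1]; ext s; simp [nonneg', le_one']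
    rw [this] at hgc
    exact ⟨W, hWo, hWz, g, hgc, fun z hz s => hgl z hz s (by rw [this]; trivial), hg0⟩
  -- globalize
  choose W hWo hWz g hgc hgl hg0 using key
  have slice : ∀ z₀, ∀ z ∈ W z₀, ∀ s : I, g z₀ (z, s) = g z (z, s) := by
    intro z₀ z hz
    have hcont : ∀ z₁, z ∈ W z₁ → Continuous (fun s : I => g z₁ (z, s)) := by
      intro z₁ hz₁
      rw [← continuousOn_univ]
      exact (hgc z₁).comp (Continuous.continuousOn (by fun_prop))
        (fun s _ => ⟨hz₁, trivial⟩)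
    have := hf.eq_of_comp_eq (hcont z₀ hz) (hcont z (hWz z))
      (funext fun s => by simp only [Function.comp_apply, hgl z₀ z hz s, hgl z z (hWz z) s])
      0 (by rw [hg0 z₀ z hz, hg0 z z (hWz z)])
    exact fun s => congrFun this s
  refine ⟨fun p => g p.1 p, ?_, fun p => hgl p.1 p.1 (hWz p.1) p.2, fun z => hg0 z z (hWz z)⟩
  rw [continuous_iff_continuousAt]
  rintro ⟨z, s⟩
  have hopen : IsOpen (W z ×ˢ (univ : Set I)) := (hWo z).prod isOpen_univ
  have hnhds : W z ×ˢ (univ : Set I) ∈ 𝓝 (z, s) := hopen.mem_nhds ⟨hWz z, trivial⟩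
  have hca : ContinuousAt (g z) (z, s) := (hgc z).continuousAt hnhds
  apply hca.congr
  apply Filter.eventuallyEq_of_mem hnhds
  rintro ⟨z', s'⟩ hp
  exact slice z z' hp.1 s'

end aux

/-- Every covering map is a semicovering map: it is a local homeomorphism and
postcomposition induces homeomorphisms of based path spaces. -/
theorem isCoveringMap_isSemicovering {X E : Type*} [TopologicalSpace X] [TopologicalSpace E]
    (f : E → X) (hf : IsCoveringMap f) :
    IsLocalHomeomorph f ∧
      ∀ e : E, IsHomeomorph (pathPost ⟨f, hf.continuous⟩ e) := by
  refine ⟨hf.isLocalHomeomorph, fun e => ?_⟩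
  set p : C(E, X) := ⟨f, hf.continuous⟩ with hp
  have hH : Continuous fun q : PathsFrom X (p e) × I => q.1.1 q.2 :=
    continuous_eval.comp ((continuous_subtype_val.comp continuous_fst).prodMk continuous_snd)
  obtain ⟨L, hLc, hLl, hL0⟩ := hf.exists_continuous_lift
    ⟨fun q : PathsFrom X (p e) × I => q.1.1 q.2, hH⟩ (fun _ => e) continuous_const
    (fun γ => γ.2.symm)
  rw [isHomeomorph_iff_exists_inverse]
  refine ⟨Continuous.subtype_mk
      ((ContinuousMap.continuous_postcomp p).comp continuous_subtype_val) _,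
    fun γ => ⟨(ContinuousMap.mk L hLc).curry γ, hL0 γ⟩, ?_, ?_, ?_⟩
  · intro α
    have h1 : Continuous fun s : I => L (pathPost p e α, s) :=
      ((ContinuousMap.mk L hLc).curry _).continuous
    have h2 := hf.eq_of_comp_eq h1 α.1.continuous
      (funext fun s => hLl (pathPost p e α, s)) 0 (by rw [hL0]; exact α.2.symm)
    exact Subtype.ext (ContinuousMap.ext fun s => congrFun h2 s)
  · intro γ
    exact Subtype.ext (ContinuousMap.ext fun s => hLl (γ, s))
  · exact Continuous.subtype_mk ((ContinuousMap.mk L hLc).curry.continuous) _
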